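/- (Reduction towards the Boyer–Finley equation.) Let p, q : ℝ³ → ℝ be smooth functions of (y¹,y³,y⁴), and define a(y¹,y²,y³,y⁴) = e^{y²} + p(y¹,y³,y⁴) and b(y¹,y²,y³,y⁴) = q(y¹,y³,y⁴) e^{−y²}. Then the equation a_{y⁴} − b_{y³} = a_{y¹} b_{y²} − a_{y²} b_{y¹} holds at every point of ℝ⁴ if and only if the 2-component system p_{y⁴} + q_{y¹} = 0 and q_{y³} = p_{y¹} q holds at every point of ℝ³. -/

import Mathlib

noncomputable section

/-- Partial derivative of `f : ℝⁿ → ℝ` in the `i`-th coordinate direction. -/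
def pd {n : ℕ} (i : Fin n) (f : (Fin n → ℝ) → ℝ) : (Fin n → ℝ) → ℝ :=
  fun p => fderiv ℝ f p (Pi.single i 1)

/-- The restriction map `(y¹,y²,y³,y⁴) ↦ (y¹,y³,y⁴)`. -/
def proj134 (w : Fin 4 → ℝ) : Fin 3 → ℝ := fun j => w (![0, 2, 3] j)

/-- `proj134` as a continuous linear map. -/
noncomputable def projL : (Fin 4 → ℝ) →L[ℝ] (Fin 3 → ℝ) :=
  ContinuousLinearMap.pi (fun j => ContinuousLinearMap.proj (![0, 2, 3] j))

lemma projL_apply (w : Fin 4 → ℝ) : projL w = proj134 w := rfl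

lemma proj_single0 : proj134 (Pi.single 0 1) = Pi.single 0 1 := by
  funext j; fin_cases j <;> simp [proj134, Pi.single_apply]
lemma proj_single1 : proj134 (Pi.single 1 1) = 0 := by
  funext j; fin_cases j <;> simp [proj134, Pi.single_apply]
lemma proj_single2 : proj134 (Pi.single 2 1) = Pi.single 1 1 := by
  funext j; fin_cases j <;> simp [proj134, Pi.single_apply]
lemma proj_single3 : proj134 (Pi.single 3 1) = Pi.single 2 1 := by
  funext j; fin_cases j <;> simp [proj134, Pi.single_apply]

lemma hasA (p : (Fin 3 → ℝ) → ℝ) (hp : Differentiable ℝ p) (w : Fin 4 → ℝ) :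
    HasFDerivAt (fun w' : Fin 4 → ℝ => Real.exp (w' 1) + p (proj134 w'))
      (Real.exp (w 1) • ContinuousLinearMap.proj 1 + (fderiv ℝ p (proj134 w)).comp projL) w := by
  have h1 : HasFDerivAt (fun w' : Fin 4 → ℝ => Real.exp (w' 1))
      (Real.exp (w 1) • (ContinuousLinearMap.proj 1 : (Fin 4 → ℝ) →L[ℝ] ℝ)) w :=
    (ContinuousLinearMap.proj 1 : (Fin 4 → ℝ) →L[ℝ] ℝ).hasFDerivAt.exp
  have h2 : HasFDerivAt (fun w' : Fin 4 → ℝ => p (proj134 w'))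
      ((fderiv ℝ p (proj134 w)).comp projL) w := by
    have := ((hp (proj134 w)).hasFDerivAt).comp w (projL.hasFDerivAt)
    simpa [Function.comp_def, projL_apply] using this
  exact h1.add h2

lemma hasB (q : (Fin 3 → ℝ) → ℝ) (hq : Differentiable ℝ q) (w : Fin 4 → ℝ) :
    HasFDerivAt (fun w' : Fin 4 → ℝ => q (proj134 w') * Real.exp (-(w' 1)))
      (q (proj134 w) • ((-Real.exp (-(w 1))) • (ContinuousLinearMap.proj 1 : (Fin 4 → ℝ) →L[ℝ] ℝ))
        + Real.exp (-(w 1)) • ((fderiv ℝ q (proj134 w)).comp projL)) w := by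
  have h1 : HasFDerivAt (fun w' : Fin 4 → ℝ => Real.exp (-(w' 1)))
      ((-Real.exp (-(w 1))) • (ContinuousLinearMap.proj 1 : (Fin 4 → ℝ) →L[ℝ] ℝ)) w := by
    have h := ((ContinuousLinearMap.proj 1 : (Fin 4 → ℝ) →L[ℝ] ℝ).hasFDerivAt (x := w)).neg.exp
    have h' : HasFDerivAt (fun w' : Fin 4 → ℝ => Real.exp (-(w' 1)))
        (Real.exp (-(w 1)) • -(ContinuousLinearMap.proj 1 : (Fin 4 → ℝ) →L[ℝ] ℝ)) w := by
      simpa using h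
    convert h' using 1
    ext x
    simp [mul_comm]
  have h2 : HasFDerivAt (fun w' : Fin 4 → ℝ => q (proj134 w'))
      ((fderiv ℝ q (proj134 w)).comp projL) w := by
    have := ((hq (proj134 w)).hasFDerivAt).comp w (projL.hasFDerivAt)
    simpa [Function.comp_def, projL_apply] using this
  exact h2.mul h1

/-- reduction towards the Boyer–Finley equation: with
`a = e^{y²} + p(y¹,y³,y⁴)` and `b = q(y¹,y³,y⁴) e^{−y²}`, the equation
`a_{y⁴} − b_{y³} = a_{y¹} b_{y²} − a_{y²} b_{y¹}` holds at every point of `ℝ⁴` iff the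
2-component system `p_{y⁴} + q_{y¹} = 0`, `q_{y³} = p_{y¹} q` holds at every point of `ℝ³`. -/
theorem stmt15 (p q : (Fin 3 → ℝ) → ℝ) (hp : ContDiff ℝ (⊤ : ℕ∞) p)
    (hq : ContDiff ℝ (⊤ : ℕ∞) q) :
    (∀ w : Fin 4 → ℝ,
      pd 3 (fun w' => Real.exp (w' 1) + p (proj134 w')) w -
          pd 2 (fun w' => q (proj134 w') * Real.exp (-(w' 1))) w =
        pd 0 (fun w' => Real.exp (w' 1) + p (proj134 w')) w *
            pd 1 (fun w' => q (proj134 w') * Real.exp (-(w' 1))) w -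
          pd 1 (fun w' => Real.exp (w' 1) + p (proj134 w')) w *
            pd 0 (fun w' => q (proj134 w') * Real.exp (-(w' 1))) w) ↔
    (∀ v : Fin 3 → ℝ, pd 2 p v + pd 0 q v = 0 ∧ pd 1 q v = pd 0 p v * q v) := by
  have hp' : Differentiable ℝ p := hp.differentiable (by simp)
  have hq' : Differentiable ℝ q := hq.differentiable (by simp)
  have pdA : ∀ (i : Fin 4) (w : Fin 4 → ℝ),
      pd i (fun w' => Real.exp (w' 1) + p (proj134 w')) w =
        Real.exp (w 1) * (Pi.single i 1 : Fin 4 → ℝ) 1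
          + fderiv ℝ p (proj134 w) (proj134 (Pi.single i 1)) := by
    intro i w
    have := (hasA p hp' w).fderiv
    simp only [pd, this]
    simp [← projL_apply]
  have pdB : ∀ (i : Fin 4) (w : Fin 4 → ℝ),
      pd i (fun w' => q (proj134 w') * Real.exp (-(w' 1))) w =
        q (proj134 w) * (-Real.exp (-(w 1)) * (Pi.single i 1 : Fin 4 → ℝ) 1)
          + Real.exp (-(w 1)) * fderiv ℝ q (proj134 w) (proj134 (Pi.single i 1)) := by
    intro i w
    have := (hasB q hq' w).fderiv
    simp only [pd, this]
    simp [← projL_apply, mul_comm]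
  constructor
  · intro H v
    have key : ∀ t : ℝ, (pd 2 p v + pd 0 q v)
        + Real.exp (-t) * (pd 0 p v * q v - pd 1 q v) = 0 := by
      intro t
      set w : Fin 4 → ℝ := ![v 0, t, v 1, v 2] with hw
      have hpr : proj134 w = v := by
        funext j; fin_cases j <;> rfl
      have heq := H w
      rw [pdA 3, pdB 2, pdA 0, pdB 1, pdA 1, pdB 0] at heq
      rw [hpr, proj_single0, proj_single1, proj_single2, proj_single3] at heq
      have hw1 : w 1 = t := rfl
      rw [hw1] at heq
      have hmul : Real.exp t * Real.exp (-t) = 1 := by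
        rw [← Real.exp_add]; simp
      simp only [Pi.single_apply] at heq
      simp only [pd] at heq ⊢
      norm_num at heq
      rw [if_neg (by decide : (1:Fin 4) ≠ 3), if_neg (by decide : (1:Fin 4) ≠ 2)] at heq
      linear_combination heq - (fderiv ℝ q v) (Pi.single 0 1) * hmul
    have h0 := key 0
    have h1 := key (Real.log 2)
    rw [Real.exp_neg, Real.exp_log (by norm_num)] at h1
    norm_num at h0 h1
    simp only [pd] at h0 h1 ⊢
    constructor <;> nlinarith [h0, h1]
  · intro H w
    obtain ⟨h1, h2⟩ := H (proj134 w)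
    have hmul : Real.exp (w 1) * Real.exp (-(w 1)) = 1 := by
      rw [← Real.exp_add]; simp
    rw [pdA 3, pdB 2, pdA 0, pdB 1, pdA 1, pdB 0]
    rw [proj_single0, proj_single1, proj_single2, proj_single3]
    simp only [Pi.single_apply, pd] at *
    norm_num
    rw [if_neg (by decide : (1:Fin 4) ≠ 3), if_neg (by decide : (1:Fin 4) ≠ 2)]
    linear_combination h1 - Real.exp (-(w 1)) * h2
      + (fderiv ℝ q (proj134 w)) (Pi.single 0 1) * hmul
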